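/- Let n be an even positive integer, m a positive integer, and C a code of length m over ℤ/(n+1)ℤ. Then: (1) Γ_C is integral if and only if C ⊆ C^⊥; (2) Γ_C is unimodular if and only if C = C^⊥; (3) Γ_C is even if and only if C ⊆ C^⊥; (4) Γ_C is even unimodular if and only if C = C^⊥ (C is Euclidean self-dual). -/

import Mathlib

open Finset

/-- The bilinear form of `m` copies of the dual `A_n` root lattice,
written in the dual basis. -/
noncomputable def BA (n m : ℕ) (x y : Fin m → Fin n → ℚ) : ℚ :=
  ∑ i, ((∑ j, x i j * y i j) -
    (1 / ((n : ℚ) + 1)) * (∑ j, x i j) * (∑ j, y i j))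

/-- The reduction map to `(ℤ/(n+1)ℤ)^m`. -/
def rhoA (n m : ℕ) (x : Fin m → Fin n → ℤ) : Fin m → ZMod (n + 1) :=
  fun i => ((∑ j, x i j : ℤ) : ZMod (n + 1))

/-- The Euclidean weight of an element of `(ℤ/(n+1)ℤ)^m`. -/
def wtE (n m : ℕ) (u : Fin m → ZMod (n + 1)) : ℕ :=
  ∑ i, (u i).val ^ 2

/-- The dual code of a set of codewords. -/
def dualCodeA (n m : ℕ) (C : Set (Fin m → ZMod (n + 1))) :
    Set (Fin m → ZMod (n + 1)) :=
  {u | ∀ v ∈ C, ∑ i, u i * v i = 0}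

/-- The lattice `Γ_C` constructed from the code `C`. -/
def GammaA (n m : ℕ) (C : Set (Fin m → ZMod (n + 1))) :
    Set (Fin m → Fin n → ℤ) :=
  {x | rhoA n m x ∈ C}

/-- Coercion of an integral vector to a rational vector. -/
def toQA (n m : ℕ) (x : Fin m → Fin n → ℤ) : Fin m → Fin n → ℚ :=
  fun i j => (x i j : ℚ)

/-- The dual lattice `Γ_C^*`, taken inside the `ℚ`-valued vectors. -/
noncomputable def dualLatticeA (n m : ℕ) (C : Set (Fin m → ZMod (n + 1))) :
    Set (Fin m → Fin n → ℚ) :=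
  {z | ∀ y ∈ GammaA n m C, ∃ k : ℤ, (k : ℚ) = BA n m z (toQA n m y)}

/-- `Γ_C` is integral. -/
def IsIntegralA (n m : ℕ) (C : Set (Fin m → ZMod (n + 1))) : Prop :=
  ∀ x ∈ GammaA n m C, ∀ y ∈ GammaA n m C,
    ∃ k : ℤ, (k : ℚ) = BA n m (toQA n m x) (toQA n m y)

/-- `Γ_C` is even. -/
def IsEvenLatA (n m : ℕ) (C : Set (Fin m → ZMod (n + 1))) : Prop :=
  IsIntegralA n m C ∧ ∀ x ∈ GammaA n m C,
    ∃ k : ℤ, ((2 * k : ℤ) : ℚ) = BA n m (toQA n m x) (toQA n m x)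

/-- `Γ_C` is unimodular. -/
def IsUnimodularA (n m : ℕ) (C : Set (Fin m → ZMod (n + 1))) : Prop :=
  dualLatticeA n m C = toQA n m '' GammaA n m C

section
variable (n m : ℕ)

lemma sum_rho_eq (x y : Fin m → Fin n → ℤ) :
    ∑ i, rhoA n m x i * rhoA n m y i =
      ((∑ i, (∑ j, x i j) * (∑ j, y i j) : ℤ) : ZMod (n + 1)) := by
  simp [rhoA]

lemma BA_int_eq (x y : Fin m → Fin n → ℤ) :
    BA n m (toQA n m x) (toQA n m y) =
      ((∑ i, ∑ j, x i j * y i j : ℤ) : ℚ) -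
        ((∑ i, (∑ j, x i j) * (∑ j, y i j) : ℤ) : ℚ) / ((n : ℚ) + 1) := by
  unfold BA toQA
  push_cast
  rw [Finset.sum_div, ← Finset.sum_sub_distrib]
  refine Finset.sum_congr rfl fun i _ => ?_
  ring

lemma exists_int_sub_div (A S : ℤ) :
    (∃ k : ℤ, (k : ℚ) = (A : ℚ) - (S : ℚ) / ((n : ℚ) + 1)) ↔ ((n : ℤ) + 1) ∣ S := by
  have hN : ((n : ℚ) + 1) ≠ 0 := by positivity
  constructor
  · rintro ⟨k, hk⟩
    refine ⟨A - k, ?_⟩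
    have : (S : ℚ) = ((n : ℚ) + 1) * ((A : ℚ) - k) := by
      field_simp at hk ⊢
      linarith
    exact_mod_cast this
  · rintro ⟨t, ht⟩
    refine ⟨A - t, ?_⟩
    rw [ht]
    push_cast
    field_simp

lemma pair_iff (x y : Fin m → Fin n → ℤ) :
    (∃ k : ℤ, (k : ℚ) = BA n m (toQA n m x) (toQA n m y)) ↔
      ∑ i, rhoA n m x i * rhoA n m y i = 0 := by
  rw [BA_int_eq, exists_int_sub_div, sum_rho_eq]
  rw [ZMod.intCast_zmod_eq_zero_iff_dvd]
  push_cast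
  rfl

lemma rho_surj (hn : 0 < n) (u : Fin m → ZMod (n + 1)) :
    ∃ x : Fin m → Fin n → ℤ, rhoA n m x = u := by
  refine ⟨fun i j => if j = ⟨0, hn⟩ then ((u i).val : ℤ) else 0, ?_⟩
  funext i
  simp [rhoA, Finset.sum_ite_eq', ZMod.natCast_val, ZMod.cast_id]

end
section
variable (n m : ℕ)

/-- delta vector -/
def deltaA (i : Fin m) (j : Fin n) : Fin m → Fin n → ℚ :=
  fun i' j' => if i' = i ∧ j' = j then 1 else 0

lemma BA_delta (z : Fin m → Fin n → ℚ) (i : Fin m) (j : Fin n) :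
    BA n m z (deltaA n m i j) = z i j - (1 / ((n : ℚ) + 1)) * ∑ j', z i j' := by
  unfold BA deltaA
  simp only [ite_and, mul_ite, mul_one, mul_zero]
  rw [Finset.sum_eq_single i]
  · simp [Finset.sum_ite_eq']
  · intro b _ hb
    simp [hb]
  · simp

lemma BA_addr (z a b : Fin m → Fin n → ℚ) :
    BA n m z (fun i j => a i j + b i j) = BA n m z a + BA n m z b := by
  unfold BA
  rw [← Finset.sum_add_distrib]
  refine Finset.sum_congr rfl fun i _ => ?_
  simp only
  have h1 : ∑ j, z i j * (a i j + b i j) = ∑ j, z i j * a i j + ∑ j, z i j * b i j := by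
    rw [← Finset.sum_add_distrib]; exact Finset.sum_congr rfl fun j _ => by ring
  rw [h1, Finset.sum_add_distrib]
  ring

lemma BA_smulr (z a : Fin m → Fin n → ℚ) (c : ℚ) :
    BA n m z (fun i j => c * a i j) = c * BA n m z a := by
  unfold BA
  rw [Finset.mul_sum]
  refine Finset.sum_congr rfl fun i _ => ?_
  simp only
  have h1 : ∑ j, z i j * (c * a i j) = c * ∑ j, z i j * a i j := by
    rw [Finset.mul_sum]; exact Finset.sum_congr rfl fun j _ => by ring
  have h2 : ∑ j, c * a i j = c * ∑ j, a i j := by rw [Finset.mul_sum]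
  rw [h1, h2]
  ring

lemma BA_negr (z a : Fin m → Fin n → ℚ) :
    BA n m z (fun i j => - a i j) = - BA n m z a := by
  have := BA_smulr n m z a (-1)
  simpa using this

end
section
variable (n m : ℕ)

lemma dual_entries (hn : 0 < n) (C : Set (Fin m → ZMod (n + 1))) (h0 : 0 ∈ C)
    (z : Fin m → Fin n → ℚ) (hz : z ∈ dualLatticeA n m C) :
    ∀ i j, ∃ k : ℤ, (k : ℚ) = z i j := by
  intro i j
  set j0 : Fin n := ⟨0, hn⟩ with hj0
  -- differences are integers
  have hdiff : ∀ j' : Fin n, ∃ k : ℤ, (k : ℚ) = z i j' - z i j0 := by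
    intro j'
    set y : Fin m → Fin n → ℤ := fun a b =>
      (if a = i ∧ b = j' then 1 else 0) - (if a = i ∧ b = j0 then 1 else 0) with hy
    have hmem : y ∈ GammaA n m C := by
      have hr : rhoA n m y = 0 := by
        funext a
        by_cases h : a = i <;>
          simp [rhoA, hy, ite_and, h, Finset.sum_sub_distrib, Finset.sum_ite_eq']
      simp only [GammaA, Set.mem_setOf_eq, hr]
      exact h0
    obtain ⟨k, hk⟩ := hz y hmem
    refine ⟨k, ?_⟩
    have htq : toQA n m y = fun a b =>
        deltaA n m i j' a b + (-1 : ℚ) * deltaA n m i j0 a b := by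
      funext a b
      simp only [toQA, deltaA, hy]
      by_cases h1 : a = i ∧ b = j' <;> by_cases h2 : a = i ∧ b = j0 <;>
          simp [h1, h2] <;> split_ifs <;> norm_num
    rw [htq] at hk
    have h2 : BA n m z (fun a b => deltaA n m i j' a b + (-1 : ℚ) * deltaA n m i j0 a b)
        = BA n m z (deltaA n m i j') + (-1) * BA n m z (deltaA n m i j0) := by
      rw [BA_addr, BA_smulr]
    rw [h2, BA_delta, BA_delta] at hk
    rw [hk]; ring
  choose a ha using hdiff
  -- (n+1) z i j0 - row sum is an integer
  have hk0 : ∃ k0 : ℤ, (k0 : ℚ) = ((n : ℚ) + 1) * z i j0 - ∑ j', z i j' := by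
    set y : Fin m → Fin n → ℤ := fun a b => if a = i ∧ b = j0 then (n : ℤ) + 1 else 0 with hy
    have hmem : y ∈ GammaA n m C := by
      have hr : rhoA n m y = 0 := by
        funext a
        by_cases h : a = i <;>
          simp [rhoA, hy, ite_and, h, Finset.sum_ite_eq']
      simp only [GammaA, Set.mem_setOf_eq, hr]
      exact h0
    obtain ⟨k, hk⟩ := hz y hmem
    refine ⟨k, ?_⟩
    have htq : toQA n m y = fun a b => ((n : ℚ) + 1) * deltaA n m i j0 a b := by
      funext a b
      simp only [toQA, deltaA, hy]
      by_cases h1 : a = i ∧ b = j0 <;> simp [h1] <;> push_cast <;> ring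
    rw [htq, BA_smulr, BA_delta] at hk
    have hN : ((n : ℚ) + 1) ≠ 0 := by positivity
    rw [hk]
    field_simp
  obtain ⟨k0, hk0⟩ := hk0
  have hsum : ∑ j', ((a j' : ℚ)) = (∑ j', z i j') - n * z i j0 := by
    rw [Finset.sum_congr rfl (fun j' _ => ha j'), Finset.sum_sub_distrib]
    simp [Finset.card_univ, mul_comm]
  have hz0 : ((k0 + ∑ j', a j' : ℤ) : ℚ) = z i j0 := by
    push_cast
    rw [hsum, hk0]
    ring
  refine ⟨a j + (k0 + ∑ j', a j'), ?_⟩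
  push_cast
  push_cast at hz0
  rw [ha j, hz0]
  ring

lemma dualLattice_eq (hn : 0 < n) (C : Set (Fin m → ZMod (n + 1))) (h0 : 0 ∈ C) :
    dualLatticeA n m C = toQA n m '' GammaA n m (dualCodeA n m C) := by
  ext z
  constructor
  · intro hz
    have he := dual_entries n m hn C h0 z hz
    choose w hw using fun i => he i
    have hwz : toQA n m w = z := by funext i j; exact hw i j
    refine ⟨w, ?_, hwz⟩
    intro v hv
    obtain ⟨x, hx⟩ := rho_surj n m hn v
    have hxg : x ∈ GammaA n m C := by
      simp only [GammaA, Set.mem_setOf_eq, hx]; exact hv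
    have h1 := hz x hxg
    rw [← hwz] at h1
    have h2 := (pair_iff n m w x).mp h1
    rwa [hx] at h2
  · rintro ⟨w, hwmem, rfl⟩
    intro y hy
    exact (pair_iff n m w y).mpr (hwmem (rhoA n m y) hy)

end
section
variable (n m : ℕ)

lemma zmod2_mul_self (a : ZMod 2) : a * a = a := by revert a; decide

lemma even_diag (heven : Even n) (x : Fin m → Fin n → ℤ)
    (hdvd : ((n : ℤ) + 1) ∣ ∑ i, (∑ j, x i j) * (∑ j, x i j)) :
    ∃ k : ℤ, ((2 * k : ℤ) : ℚ) = BA n m (toQA n m x) (toQA n m x) := by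
  obtain ⟨T, hT⟩ := hdvd
  set A : ℤ := ∑ i, ∑ j, x i j * x i j with hA
  have hn2 : ((n : ℕ) : ZMod 2) = 0 := by
    rw [ZMod.natCast_eq_zero_iff]
    exact heven.two_dvd
  have hST : ((∑ i, (∑ j, x i j) * (∑ j, x i j) : ℤ) : ZMod 2) = ((T : ℤ) : ZMod 2) := by
    rw [hT]; push_cast; rw [hn2]; ring
  have hSA : ((∑ i, (∑ j, x i j) * (∑ j, x i j) : ℤ) : ZMod 2) = ((A : ℤ) : ZMod 2) := by
    rw [hA]; push_cast
    refine Finset.sum_congr rfl fun i _ => ?_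
    rw [zmod2_mul_self]
    exact Finset.sum_congr rfl fun j _ => (zmod2_mul_self _).symm
  have h2 : (2 : ℤ) ∣ A - T := by
    have : ((A - T : ℤ) : ZMod 2) = 0 := by
      push_cast
      rw [← hSA, hST]
      push_cast
      ring
    exact_mod_cast (ZMod.intCast_zmod_eq_zero_iff_dvd (A - T) 2).mp this
  obtain ⟨k, hk⟩ := h2
  refine ⟨k, ?_⟩
  rw [BA_int_eq, hT, ← hA]
  have hN : ((n : ℚ) + 1) ≠ 0 := by positivity
  have hAT : (A : ℚ) - (T : ℚ) = ((2 * k : ℤ) : ℚ) := by exact_mod_cast congrArg (fun t : ℤ => (t : ℚ)) hk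
  push_cast at hAT ⊢
  field_simp
  linarith

end
theorem stmt5 (n m : ℕ) (hn : 0 < n) (heven : Even n) (hm : 0 < m)
    (C : Submodule (ZMod (n + 1)) (Fin m → ZMod (n + 1))) :
    (IsIntegralA n m (C : Set _) ↔
        (C : Set _) ⊆ dualCodeA n m (C : Set _)) ∧
    (IsUnimodularA n m (C : Set _) ↔
        (C : Set _) = dualCodeA n m (C : Set _)) ∧
    (IsEvenLatA n m (C : Set _) ↔
        (C : Set _) ⊆ dualCodeA n m (C : Set _)) ∧
    ((IsEvenLatA n m (C : Set _) ∧ IsUnimodularA n m (C : Set _)) ↔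
        (C : Set _) = dualCodeA n m (C : Set _)) := by
  have part1 : IsIntegralA n m (C : Set _) ↔
      (C : Set _) ⊆ dualCodeA n m (C : Set _) := by
    constructor
    · intro h u hu v hv
      obtain ⟨x, hx⟩ := rho_surj n m hn u
      obtain ⟨y, hy⟩ := rho_surj n m hn v
      have hxg : x ∈ GammaA n m (C : Set _) := by
        show rhoA n m x ∈ (C : Set _); rw [hx]; exact hu
      have hyg : y ∈ GammaA n m (C : Set _) := by
        show rhoA n m y ∈ (C : Set _); rw [hy]; exact hv
      have := (pair_iff n m x y).mp (h x hxg y hyg)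
      rwa [hx, hy] at this
    · intro h x hx y hy
      exact (pair_iff n m x y).mpr (h hx (rhoA n m y) hy)
  have part2 : IsUnimodularA n m (C : Set _) ↔
      (C : Set _) = dualCodeA n m (C : Set _) := by
    have hEq := dualLattice_eq n m hn (C : Set _) C.zero_mem
    constructor
    · intro h
      have himg : toQA n m '' GammaA n m (dualCodeA n m (C : Set _)) =
          toQA n m '' GammaA n m (C : Set _) := by rw [← hEq, h]
      have hinj : Function.Injective (toQA n m) := by
        intro a b hab
        funext i j
        have := congrFun (congrFun hab i) j
        simp only [toQA] at this
        exact_mod_cast this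
      have hGam : GammaA n m (dualCodeA n m (C : Set _)) = GammaA n m (C : Set _) :=
        (Set.image_injective.mpr hinj) himg
      ext u
      constructor
      · intro hu
        obtain ⟨x, hx⟩ := rho_surj n m hn u
        have hxg : x ∈ GammaA n m (C : Set _) := by
          show rhoA n m x ∈ (C : Set _); rw [hx]; exact hu
        rw [← hGam] at hxg
        have : rhoA n m x ∈ dualCodeA n m (C : Set _) := hxg
        rwa [hx] at this
      · intro hu
        obtain ⟨x, hx⟩ := rho_surj n m hn u
        have hxg : x ∈ GammaA n m (dualCodeA n m (C : Set _)) := by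
          show rhoA n m x ∈ dualCodeA n m (C : Set _); rw [hx]; exact hu
        rw [hGam] at hxg
        have : rhoA n m x ∈ (C : Set _) := hxg
        rwa [hx] at this
    · intro h
      unfold IsUnimodularA
      rw [hEq, ← h]
  have part3 : IsEvenLatA n m (C : Set _) ↔
      (C : Set _) ⊆ dualCodeA n m (C : Set _) := by
    constructor
    · intro h
      exact part1.mp h.1
    · intro h
      refine ⟨part1.mpr h, ?_⟩
      intro x hx
      have h0 : ∑ i, rhoA n m x i * rhoA n m x i = 0 := h hx (rhoA n m x) hx
      rw [sum_rho_eq] at h0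
      have hdvd : ((n : ℤ) + 1) ∣ ∑ i, (∑ j, x i j) * (∑ j, x i j) := by
        have := (ZMod.intCast_zmod_eq_zero_iff_dvd
          (∑ i, (∑ j, x i j) * (∑ j, x i j)) (n + 1)).mp h0
        exact_mod_cast this
      exact even_diag n m heven x hdvd
  refine ⟨part1, part2, part3, ?_⟩
  constructor
  · rintro ⟨_, hu⟩
    exact part2.mp hu
  · intro h
    exact ⟨part3.mpr h.subset, part2.mpr h⟩
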